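/- For 0 < p < 1/2 and 0 < R < 1, the following identity holds: min_{0 ≤ q ≤ 1/2} ([1 - h(q) - R]_+ + d(q‖p)) = max_{0 ≤ s ≤ 1} (-sR + E_0(s,p)), where d(q‖p) = q log₂(q/p) + (1-q) log₂((1-q)/(1-p)), h is binary entropy, E_0(s,p) = s - log₂[p^{1/(1+s)} + (1-p)^{1/(1+s)}]^{1+s}, and [a]_+ = max{a,0}. -/

import Mathlib

/-- Binary entropy (base-2 logarithm). -/
noncomputable def H2 (p : ℝ) : ℝ := -(p * Real.logb 2 p) - (1 - p) * Real.logb 2 (1 - p)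

/-- Binary Kullback–Leibler divergence (base-2 logarithm). -/
noncomputable def D2 (q p : ℝ) : ℝ :=
  q * Real.logb 2 (q / p) + (1 - q) * Real.logb 2 ((1 - q) / (1 - p))

/-- Gallager's function `E₀(s,p)` for the binary symmetric channel. -/
noncomputable def E0 (s p : ℝ) : ℝ :=
  s - Real.logb 2 ((p ^ (1 / (1 + s)) + (1 - p) ^ (1 / (1 + s))) ^ (1 + s))

noncomputable def qpt (p s : ℝ) : ℝ :=
  p ^ (1 / (1 + s)) / (p ^ (1 / (1 + s)) + (1 - p) ^ (1 / (1 + s)))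

lemma logb_rpow' {x y : ℝ} (hx : 0 < x) : Real.logb 2 (x ^ y) = y * Real.logb 2 x := by
  rw [Real.logb, Real.logb, Real.log_rpow hx, mul_div_assoc]

lemma qpt_pos {p s : ℝ} (hp0 : 0 < p) (hp1 : p < 1) (hs : 0 ≤ s) : 0 < qpt p s := by
  have h1s : (0:ℝ) < 1 + s := by linarith
  have ha : 0 < p ^ (1 / (1 + s)) := Real.rpow_pos_of_pos hp0 _
  have hb : 0 < (1 - p) ^ (1 / (1 + s)) := Real.rpow_pos_of_pos (by linarith) _
  exact div_pos ha (by linarith)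

lemma qpt_le_half {p s : ℝ} (hp0 : 0 < p) (hp1 : p < 1/2) (hs : 0 ≤ s) : qpt p s ≤ 1/2 := by
  have h1s : (0:ℝ) < 1 + s := by linarith
  have ha : 0 < p ^ (1 / (1 + s)) := Real.rpow_pos_of_pos hp0 _
  have hb : 0 < (1 - p) ^ (1 / (1 + s)) := Real.rpow_pos_of_pos (by linarith) _
  have hab : p ^ (1 / (1 + s)) ≤ (1 - p) ^ (1 / (1 + s)) :=
    Real.rpow_le_rpow hp0.le (by linarith) (by positivity)
  rw [qpt, div_le_iff₀ (by linarith)]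
  linarith

lemma qpt_zero {p : ℝ} (hp0 : 0 < p) (hp1 : p < 1) : qpt p 0 = p := by
  have : (1:ℝ) / (1 + 0) = 1 := by norm_num
  rw [qpt, this, Real.rpow_one, Real.rpow_one]
  have : p + (1 - p) = 1 := by ring
  rw [this, div_one]

lemma E0_eq {p s : ℝ} (hp0 : 0 < p) (hp1 : p < 1) (hs : 0 ≤ s) :
    E0 s p = s - (1 + s) * Real.logb 2 (p ^ (1 / (1 + s)) + (1 - p) ^ (1 / (1 + s))) := by
  have ha : 0 < p ^ (1 / (1 + s)) := Real.rpow_pos_of_pos hp0 _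
  have hb : 0 < (1 - p) ^ (1 / (1 + s)) := Real.rpow_pos_of_pos (by linarith) _
  rw [E0, logb_rpow' (by linarith)]

lemma keyB {p s q : ℝ} (hp0 : 0 < p) (hp1 : p < 1) (hs : 0 ≤ s) (hq0 : 0 ≤ q) (hq1 : q < 1) :
    D2 q p + s * (1 - H2 q) = E0 s p + (1 + s) * D2 q (qpt p s) := by
  have h1s : (0:ℝ) < 1 + s := by linarith
  have ha : 0 < p ^ (1 / (1 + s)) := Real.rpow_pos_of_pos hp0 _
  have hb : 0 < (1 - p) ^ (1 / (1 + s)) := Real.rpow_pos_of_pos (by linarith) _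
  have hZ : 0 < p ^ (1 / (1 + s)) + (1 - p) ^ (1 / (1 + s)) := by linarith
  have hqs0 : 0 < qpt p s := qpt_pos hp0 hp1 hs
  have hqs1 : qpt p s < 1 := by
    rw [qpt, div_lt_one hZ]; linarith
  have h1qs : 1 - qpt p s = (1 - p) ^ (1 / (1 + s)) / (p ^ (1 / (1 + s)) + (1 - p) ^ (1 / (1 + s))) := by
    rw [qpt]; field_simp; ring
  have hLqs : Real.logb 2 (qpt p s)
      = (1 / (1 + s)) * Real.logb 2 p - Real.logb 2 (p ^ (1 / (1 + s)) + (1 - p) ^ (1 / (1 + s))) := by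
    rw [qpt, Real.logb_div ha.ne' hZ.ne', logb_rpow' hp0]
  have hL1qs : Real.logb 2 (1 - qpt p s)
      = (1 / (1 + s)) * Real.logb 2 (1 - p) - Real.logb 2 (p ^ (1 / (1 + s)) + (1 - p) ^ (1 / (1 + s))) := by
    rw [h1qs, Real.logb_div hb.ne' hZ.ne', logb_rpow' (by linarith)]
  have hθ : (1 + s) * (1 / (1 + s)) = 1 := by field_simp
  rcases eq_or_lt_of_le hq0 with h0 | h0
  · -- q = 0
    subst h0
    rw [D2, D2, H2, E0_eq hp0 hp1 hs, zero_div, Real.logb_zero,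
        Real.logb_div (by norm_num : (1:ℝ) - 0 ≠ 0) (by linarith : (1:ℝ) - p ≠ 0),
        Real.logb_div (by norm_num : (1:ℝ) - 0 ≠ 0) (by linarith : (1:ℝ) - qpt p s ≠ 0),
        hL1qs]
    rw [show (1:ℝ) - 0 = 1 by norm_num, Real.logb_one]
    linear_combination (Real.logb 2 (1 - p)) * hθ
  · -- 0 < q < 1
    have hq1' : (0:ℝ) < 1 - q := by linarith
    rw [D2, D2, H2, E0_eq hp0 hp1 hs,
        Real.logb_div h0.ne' hp0.ne', Real.logb_div hq1'.ne' (by linarith : (1:ℝ) - p ≠ 0),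
        Real.logb_div h0.ne' hqs0.ne', Real.logb_div hq1'.ne' (by linarith : (1:ℝ) - qpt p s ≠ 0),
        hLqs, hL1qs]
    linear_combination (q * Real.logb 2 p + (1 - q) * Real.logb 2 (1 - p)) * hθ

lemma D2_self {q : ℝ} (h0 : 0 < q) (h1 : q < 1) : D2 q q = 0 := by
  rw [D2, div_self h0.ne', div_self (by linarith : (1:ℝ) - q ≠ 0), Real.logb_one]
  ring

lemma D2_nonneg {q r : ℝ} (hq0 : 0 ≤ q) (hq1 : q < 1) (hr0 : 0 < r) (hr1 : r < 1) :
    0 ≤ D2 q r := by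
  have hl2 : 0 < Real.log 2 := Real.log_pos (by norm_num)
  rcases eq_or_lt_of_le hq0 with h0 | h0
  · subst h0
    rw [D2, zero_div, Real.logb_zero]
    have h1 : (1:ℝ) - 0 = 1 := by norm_num
    rw [h1]
    have : (0:ℝ) ≤ Real.logb 2 (1 / (1 - r)) := by
      apply Real.logb_nonneg (by norm_num)
      rw [le_div_iff₀ (by linarith)]; linarith
    linarith
  · have hq1' : (0:ℝ) < 1 - q := by linarith
    have hr1' : (0:ℝ) < 1 - r := by linarith
    have k1 : Real.log (r / q) ≤ r / q - 1 := Real.log_le_sub_one_of_pos (by positivity)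
    have k2 : Real.log ((1 - r) / (1 - q)) ≤ (1 - r) / (1 - q) - 1 :=
      Real.log_le_sub_one_of_pos (by positivity)
    have e1 : Real.log (q / r) = -Real.log (r / q) := by
      rw [← Real.log_inv]; congr 1; field_simp
    have e2 : Real.log ((1 - q) / (1 - r)) = -Real.log ((1 - r) / (1 - q)) := by
      rw [← Real.log_inv]; congr 1; field_simp
    rw [D2, Real.logb, Real.logb, e1, e2]
    have hrq : q * (r / q) = r := by field_simp
    have h1q : (1 - q) * ((1 - r) / (1 - q)) = 1 - r := by field_simp
    have m1 := mul_le_mul_of_nonneg_left k1 h0.le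
    have m2 := mul_le_mul_of_nonneg_left k2 hq1'.le
    have key : 0 ≤ q * -Real.log (r / q) + (1 - q) * -Real.log ((1 - r) / (1 - q)) := by
      nlinarith
    have e3 : q * (-Real.log (r / q) / Real.log 2) + (1 - q) * (-Real.log ((1 - r) / (1 - q)) / Real.log 2)
        = (q * -Real.log (r / q) + (1 - q) * -Real.log ((1 - r) / (1 - q))) / Real.log 2 := by ring
    rw [e3]
    exact div_nonneg key hl2.le

lemma qpt_contOn {p : ℝ} (hp0 : 0 < p) (hp1 : p < 1) :
    ContinuousOn (fun s => qpt p s) (Set.Icc (0:ℝ) 1) := by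
  have hns : ∀ s ∈ Set.Icc (0:ℝ) 1, (1:ℝ) + s ≠ 0 := fun s hs => by
    have := hs.1; intro h; linarith
  have hexp : ContinuousOn (fun s : ℝ => 1 / (1 + s)) (Set.Icc (0:ℝ) 1) :=
    ContinuousOn.div continuousOn_const (by fun_prop) hns
  have ha : ContinuousOn (fun s : ℝ => p ^ (1 / (1 + s))) (Set.Icc (0:ℝ) 1) :=
    ContinuousOn.rpow continuousOn_const hexp (fun x _ => Or.inl hp0.ne')
  have hb : ContinuousOn (fun s : ℝ => (1 - p) ^ (1 / (1 + s))) (Set.Icc (0:ℝ) 1) :=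
    ContinuousOn.rpow continuousOn_const hexp (fun x _ => Or.inl (by linarith : (1:ℝ) - p ≠ 0))
  exact ContinuousOn.div ha (ha.add hb) (fun x hx => by
    have h1s : (0:ℝ) < 1 + x := by have := hx.1; linarith
    have := Real.rpow_pos_of_pos hp0 (1 / (1 + x))
    have := Real.rpow_pos_of_pos (by linarith : (0:ℝ) < 1 - p) (1 / (1 + x))
    positivity)

lemma H2_contOn : ContinuousOn H2 (Set.Ioo (0:ℝ) 1) := by
  intro x hx
  apply ContinuousAt.continuousWithinAt
  have hx0 : x ≠ 0 := ne_of_gt hx.1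
  have hx1 : (1:ℝ) - x ≠ 0 := by have := hx.2; intro h; linarith
  unfold H2 Real.logb
  fun_prop (disch := simp_all)

lemma phi_contOn {p : ℝ} (hp0 : 0 < p) (hp1 : p < 1/2) :
    ContinuousOn (fun s => H2 (qpt p s)) (Set.Icc (0:ℝ) 1) := by
  apply H2_contOn.comp (qpt_contOn hp0 (by linarith))
  intro s hs
  exact ⟨qpt_pos hp0 (by linarith) hs.1, lt_of_le_of_lt (qpt_le_half hp0 hp1 hs.1) (by norm_num)⟩

lemma E0_zero {p : ℝ} (hp0 : 0 < p) (hp1 : p < 1) : E0 0 p = 0 := by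
  rw [E0_eq hp0 hp1 le_rfl]
  have h1 : (1:ℝ) / (1 + 0) = 1 := by norm_num
  rw [h1, Real.rpow_one, Real.rpow_one, show p + (1 - p) = 1 by ring, Real.logb_one]
  ring

lemma qpt_lt_one {p s : ℝ} (hp0 : 0 < p) (hp1 : p < 1/2) (hs : 0 ≤ s) : qpt p s < 1 :=
  lt_of_le_of_lt (qpt_le_half hp0 hp1 hs) (by norm_num)


/-- for `0 < p < 1/2` and `0 < R < 1`,
`min_{0≤q≤1/2}([1 - h(q) - R]_+ + d(q‖p)) = max_{0≤s≤1}(-sR + E₀(s,p))`. -/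
theorem stmt14 (p R : ℝ) (hp0 : 0 < p) (hp1 : p < 1 / 2) (hR0 : 0 < R) (hR1 : R < 1) :
    sInf ((fun q => max (1 - H2 q - R) 0 + D2 q p) '' Set.Icc (0 : ℝ) (1 / 2)) =
      sSup ((fun s => -s * R + E0 s p) '' Set.Icc (0 : ℝ) 1) := by
  have hp1' : p < 1 := by linarith
  set f : ℝ → ℝ := fun q => max (1 - H2 q - R) 0 + D2 q p with hf
  set g : ℝ → ℝ := fun s => -s * R + E0 s p with hg
  -- weak duality
  have hdual : ∀ s ∈ Set.Icc (0:ℝ) 1, ∀ q ∈ Set.Icc (0:ℝ) (1/2), g s ≤ f q := by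
    intro s hs q hq
    have hq1 : q < 1 := lt_of_le_of_lt hq.2 (by norm_num)
    have hB := keyB hp0 hp1' hs.1 hq.1 hq1
    have hD : 0 ≤ D2 q (qpt p s) :=
      D2_nonneg hq.1 hq1 (qpt_pos hp0 hp1' hs.1) (qpt_lt_one hp0 hp1 hs.1)
    have hD' : 0 ≤ (1 + s) * D2 q (qpt p s) := mul_nonneg (by linarith [hs.1]) hD
    have hmax : s * (1 - H2 q - R) ≤ max (1 - H2 q - R) 0 := by
      rcases le_total (1 - H2 q - R) 0 with h | h
      · have : s * (1 - H2 q - R) ≤ 0 := mul_nonpos_of_nonneg_of_nonpos hs.1 h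
        exact this.trans (le_max_right _ _)
      · have : s * (1 - H2 q - R) ≤ 1 - H2 q - R := by nlinarith [hs.2]
        exact this.trans (le_max_left _ _)
    simp only [hf, hg]
    nlinarith [hB, hD', hmax]
  have hpmem : p ∈ Set.Icc (0:ℝ) (1/2) := ⟨hp0.le, hp1.le⟩
  have hne_f : ((f '' Set.Icc (0:ℝ) (1/2))).Nonempty := ⟨f p, ⟨p, hpmem, rfl⟩⟩
  have hne_g : ((g '' Set.Icc (0:ℝ) 1)).Nonempty := ⟨g 0, ⟨0, ⟨le_rfl, by norm_num⟩, rfl⟩⟩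
  have hbdd_f : BddBelow (f '' Set.Icc (0:ℝ) (1/2)) := by
    refine ⟨0, ?_⟩
    rintro x ⟨q, hq, rfl⟩
    have hq1 : q < 1 := lt_of_le_of_lt hq.2 (by norm_num)
    exact add_nonneg (le_max_right _ _) (D2_nonneg hq.1 hq1 hp0 hp1')
  have hbdd_g : BddAbove (g '' Set.Icc (0:ℝ) 1) := by
    refine ⟨f p, ?_⟩
    rintro y ⟨s, hs, rfl⟩
    exact hdual s hs p hpmem
  have h1 : sSup (g '' Set.Icc (0:ℝ) 1) ≤ sInf (f '' Set.Icc (0:ℝ) (1/2)) := by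
    apply csSup_le hne_g
    rintro y ⟨s, hs, rfl⟩
    apply le_csInf hne_f
    rintro x ⟨q, hq, rfl⟩
    exact hdual s hs q hq
  -- find attaining pair
  obtain ⟨qstar, sstar, hqmem, hsmem, heq⟩ :
      ∃ qstar sstar, qstar ∈ Set.Icc (0:ℝ) (1/2) ∧ sstar ∈ Set.Icc (0:ℝ) 1 ∧ f qstar = g sstar := by
    rcases le_or_gt (1 - H2 p) R with hc | hc
    · refine ⟨p, 0, hpmem, ⟨le_rfl, by norm_num⟩, ?_⟩
      have h2 : max (1 - H2 p - R) 0 = 0 := max_eq_right (by linarith)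
      simp only [hf, hg, h2, D2_self hp0 hp1', E0_zero hp0 hp1']
      ring
    · rcases le_or_gt R (1 - H2 (qpt p 1)) with hd | hd
      · have hq0 := qpt_pos hp0 hp1' (by norm_num : (0:ℝ) ≤ 1)
        have hq1 := qpt_lt_one hp0 hp1 (by norm_num : (0:ℝ) ≤ 1)
        refine ⟨qpt p 1, 1, ⟨hq0.le, qpt_le_half hp0 hp1 (by norm_num)⟩, ⟨by norm_num, le_rfl⟩, ?_⟩
        have hB := keyB hp0 hp1' (by norm_num : (0:ℝ) ≤ 1) hq0.le hq1
        rw [D2_self hq0 hq1] at hB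
        have h2 : max (1 - H2 (qpt p 1) - R) 0 = 1 - H2 (qpt p 1) - R := max_eq_left (by linarith)
        simp only [hf, hg, h2]
        linarith [hB]
      · have hsub : Set.Icc ((fun s => H2 (qpt p s)) 0) ((fun s => H2 (qpt p s)) 1)
            ⊆ (fun s => H2 (qpt p s)) '' Set.Icc (0:ℝ) 1 :=
          intermediate_value_Icc (by norm_num) (phi_contOn hp0 hp1)
        have hmemv : (1 - R) ∈ Set.Icc ((fun s => H2 (qpt p s)) 0) ((fun s => H2 (qpt p s)) 1) := by
          constructor
          · simp only [qpt_zero hp0 hp1']; linarith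
          · simp only []; linarith
        obtain ⟨sstar, hsmem, hval⟩ := hsub hmemv
        have hq0 := qpt_pos hp0 hp1' hsmem.1
        have hq1 := qpt_lt_one hp0 hp1 hsmem.1
        refine ⟨qpt p sstar, sstar, ⟨hq0.le, qpt_le_half hp0 hp1 hsmem.1⟩, hsmem, ?_⟩
        have hB := keyB hp0 hp1' hsmem.1 hq0.le hq1
        rw [D2_self hq0 hq1] at hB
        have hH : H2 (qpt p sstar) = 1 - R := hval
        rw [hH] at hB
        have h2 : max (1 - H2 (qpt p sstar) - R) 0 = 0 := by
          rw [hH]; norm_num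
        simp only [hf, hg, h2]
        linarith [hB]
  have h2 : sInf (f '' Set.Icc (0:ℝ) (1/2)) ≤ sSup (g '' Set.Icc (0:ℝ) 1) := by
    calc sInf (f '' Set.Icc (0:ℝ) (1/2)) ≤ f qstar := csInf_le hbdd_f ⟨qstar, hqmem, rfl⟩
    _ = g sstar := heq
    _ ≤ sSup (g '' Set.Icc (0:ℝ) 1) := le_csSup hbdd_g ⟨sstar, hsmem, rfl⟩
  exact le_antisymm h2 h1
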